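/- In the ring ℚ(t)[v_1^±, v_2^±, …] of polynomials in two families of variables, the double Hall-Littlewood elements V_{λ,μ}, defined by applying the operator 𝕃·ℝ^+·ℝ^- to v^+_λ v^-_μ, satisfy V_{λ,μ} ∈ v_{λ,μ} + ∑ ℚ(t)·v_{λ̃,μ̃} where the sum runs over bipartitions (λ̃, μ̃) strictly dominating (λ, μ); consequently {V_{λ,μ}} over all bipartitions is a ℚ(t)-basis of ℚ(t)[v_1^±, v_2^±, …]. -/

import Mathlib

/- STATEMENT 12: In 𝒟Λ_t = ℚ(t)[v₁⁺,v₂⁺,…,v₁⁻,v₂⁻,…], the double Hall-Littlewood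
elements V_{λ,μ} = 𝕃·ℝ⁺·ℝ⁻ (v⁺_λ v⁻_μ) (fully expanded, with the finite product
of operators at the lengths of λ and μ) satisfy
  V_{λ,μ} ∈ v_{λ,μ} + ∑_{(λ̃,μ̃) ⊳ (λ,μ)} ℚ(t) v_{λ̃,μ̃},
sum over bipartitions strictly dominating (λ,μ) in the extended dominance order
(λ̃ ⊵ λ iff |λ̃| < |λ|, or |λ̃| = |λ| and λ̃ dominates λ); consequently
{V_{λ,μ}} over all bipartitions is a ℚ(t)-basis of 𝒟Λ_t. -/

noncomputable section

attribute [local instance] Classical.propDecidable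

local notation "K" => RatFunc ℚ

noncomputable def tv : K := RatFunc.X

abbrev RV : Type := MvPolynomial (Bool × ℕ) K

noncomputable def vz (s : Bool) (a : ℤ) : RV :=
  if a < 0 then 0 else if a = 0 then 1 else MvPolynomial.X (s, a.toNat - 1)

noncomputable def cL (p : ℕ) : K := if p = 0 then 1 else (1 - tv⁻¹) * tv ^ p

/-- V_{α,β}, fully expanded. -/
noncomputable def Vv (ℓ m : ℕ) (a : Fin ℓ → ℤ) (b : Fin m → ℤ) : RV :=
  ∑ᶠ S : Fin ℓ × Fin m → ℕ, ∑ᶠ P : Fin ℓ × Fin ℓ → ℕ, ∑ᶠ P' : Fin m × Fin m → ℕ,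
    if (∀ ij : Fin ℓ × Fin ℓ, ¬ ij.1 < ij.2 → P ij = 0) ∧
        (∀ ij : Fin m × Fin m, ¬ ij.1 < ij.2 → P' ij = 0) then
      ((∏ ij : Fin ℓ × Fin m, cL (S ij)) * (∏ ij : Fin ℓ × Fin ℓ, cL (P ij)) *
          ∏ ij : Fin m × Fin m, cL (P' ij)) •
        ((∏ i, vz true (a i - (∑ j, (S (i, j) : ℤ))
              + (∑ k, (P (i, k) : ℤ)) - ∑ k, (P (k, i) : ℤ))) *
         ∏ j, vz false (b j - (∑ i, (S (i, j) : ℤ))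
              + (∑ k, (P' (j, k) : ℤ)) - ∑ k, (P' (k, j) : ℤ)))
    else 0

def IsPart (f : ℕ → ℕ) : Prop := Antitone f ∧ ∃ N, ∀ n, N ≤ n → f n = 0

noncomputable def plen (f : ℕ → ℕ) : ℕ := sInf {N | ∀ n, N ≤ n → f n = 0}

/-- V_{λ,μ} for a bipartition. -/
noncomputable def Vpart (f g : ℕ → ℕ) : RV :=
  Vv (plen f) (plen g) (fun k => (f (k : ℕ) : ℤ)) (fun k => (g (k : ℕ) : ℤ))

/-- the monomial v_{λ,μ} = v⁺_λ v⁻_μ. -/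
noncomputable def vmono (f g : ℕ → ℕ) : RV :=
  (∏ᶠ i : ℕ, vz true (f i)) * ∏ᶠ i : ℕ, vz false (g i)

/-- extended dominance order on partitions: g ⊵ f iff |g| < |f|, or |g| = |f| and
g dominates f. -/
def PDom (g f : ℕ → ℕ) : Prop :=
  (∑ᶠ i, g i) < (∑ᶠ i, f i) ∨
    ((∑ᶠ i, g i) = (∑ᶠ i, f i) ∧
      ∀ k, ∑ i ∈ Finset.range k, f i ≤ ∑ i ∈ Finset.range k, g i)

-- basic vz lemmas
lemma vz_neg {s : Bool} {a : ℤ} (h : a < 0) : vz s a = 0 := by simp [vz, h]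
lemma vz_zero {s : Bool} : vz s 0 = 1 := by simp [vz]
lemma vz_natCast (s : Bool) (n : ℕ) :
    vz s (n : ℤ) = if n = 0 then 1 else MvPolynomial.X (s, n - 1) := by
  by_cases h : n = 0
  · simp [h, vz]
  · have h1 : ¬ ((n:ℤ) < 0) := by exact_mod_cast Int.not_lt.mpr (Int.natCast_nonneg n)
    have h2 : (n:ℤ) ≠ 0 := by exact_mod_cast h
    simp [vz, h1, h2, h]

-- plen lemmas
lemma plen_spec {f : ℕ → ℕ} (hf : IsPart f) : ∀ n, plen f ≤ n → f n = 0 := by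
  have : {N | ∀ n, N ≤ n → f n = 0}.Nonempty := hf.2
  exact Nat.sInf_mem this

lemma lt_plen_of_ne {f : ℕ → ℕ} (hf : IsPart f) {i : ℕ} (hi : f i ≠ 0) : i < plen f := by
  by_contra h
  exact hi (plen_spec hf i (le_of_not_gt h))

lemma pos_of_lt_plen {f : ℕ → ℕ} (hf : IsPart f) {i : ℕ} (hi : i < plen f) : 0 < f i := by
  rcases Nat.eq_zero_or_pos (f i) with h | h
  · exfalso
    have : i ∈ {N | ∀ n, N ≤ n → f n = 0} := fun n hn => Nat.le_zero.mp (h ▸ hf.1 hn)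
    exact absurd (Nat.sInf_le this) (not_le.mpr hi)
  · exact h

lemma support_subset_plen {f : ℕ → ℕ} (hf : IsPart f) :
    Function.support f ⊆ ↑(Finset.range (plen f)) := by
  intro i hi
  simp only [Function.mem_support] at hi
  simpa using lt_plen_of_ne hf hi

lemma psum_eq_sum_range {f : ℕ → ℕ} (hf : IsPart f) {M : ℕ} (hM : plen f ≤ M) :
    ∑ᶠ i, f i = ∑ i ∈ Finset.range M, f i := by
  apply finsum_eq_finset_sum_of_support_subset
  exact (support_subset_plen hf).trans (by simpa using Finset.range_subset_range.mpr hM)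

lemma sum_range_le_psum {f : ℕ → ℕ} (hf : IsPart f) (k : ℕ) :
    ∑ i ∈ Finset.range k, f i ≤ ∑ᶠ i, f i := by
  rw [psum_eq_sum_range hf (le_max_left (plen f) k)]
  exact Finset.sum_le_sum_of_subset (Finset.range_subset_range.mpr (le_max_right _ _))

lemma apply_le_psum {f : ℕ → ℕ} (hf : IsPart f) (i : ℕ) : f i ≤ ∑ᶠ j, f j := by
  calc f i ≤ ∑ j ∈ Finset.range (i+1), f j :=
        Finset.single_le_sum (f := f) (fun _ _ => Nat.zero_le _) (by simp)
    _ ≤ _ := sum_range_le_psum hf _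

lemma eventually_zero_of_psum_le {f : ℕ → ℕ} (hf : IsPart f) {n k : ℕ}
    (hs : ∑ᶠ i, f i ≤ n) (hk : n ≤ k) : f k = 0 := by
  by_contra h
  have h1 : ∀ i ∈ Finset.range (k+1), 1 ≤ f i := by
    intro i hi
    simp only [Finset.mem_range] at hi
    have := hf.1 (Nat.lt_succ_iff.mp hi)
    omega
  have : k + 1 ≤ ∑ i ∈ Finset.range (k+1), f i := by
    simpa using Finset.sum_le_sum h1
  have := sum_range_le_psum hf (k+1)
  omega

def mult (f : ℕ → ℕ) (r : ℕ) : ℕ :=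
  ((Finset.range (plen f)).filter (fun i => f i = r + 1)).card

def cnt (f : ℕ → ℕ) (v : ℕ) : ℕ :=
  ((Finset.range (plen f)).filter (fun i => v ≤ f i)).card

lemma le_iff_lt_cnt {f : ℕ → ℕ} (hf : IsPart f) {v : ℕ} (hv : 1 ≤ v) (k : ℕ) :
    v ≤ f k ↔ k < cnt f v := by
  constructor
  · intro h
    have hk : k < plen f := lt_plen_of_ne hf (by omega)
    have : Finset.range (k+1) ⊆ (Finset.range (plen f)).filter (fun i => v ≤ f i) := by
      intro i hi
      simp only [Finset.mem_range] at hi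
      have hik : i ≤ k := by omega
      refine Finset.mem_filter.mpr ⟨Finset.mem_range.mpr (by omega), ?_⟩
      exact h.trans (hf.1 hik)
    exact (Finset.card_range (k+1)).symm.trans_le (Finset.card_le_card this)
  · intro h
    by_contra hvf
    have : (Finset.range (plen f)).filter (fun i => v ≤ f i) ⊆ Finset.range k := by
      intro i hi
      simp only [Finset.mem_filter, Finset.mem_range] at hi ⊢
      by_contra hik
      have := hf.1 (le_of_not_gt hik)
      omega
    have := Finset.card_le_card this
    simp only [Finset.card_range] at this
    simp only [cnt] at h
    omega

lemma mult_add_cnt {f : ℕ → ℕ} (r : ℕ) : mult f r + cnt f (r + 2) = cnt f (r + 1) := by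
  classical
  unfold mult cnt
  rw [← Finset.card_union_of_disjoint]
  · congr 1
    rw [← Finset.filter_or]
    apply Finset.filter_congr
    intro i _
    constructor
    · rintro (h | h) <;> omega
    · intro h; omega
  · rw [Finset.disjoint_filter]
    intro i _ h1 h2
    omega

lemma mult_bound {f : ℕ → ℕ} (hf : IsPart f) {r : ℕ} (h : mult f r ≠ 0) : r < f 0 := by
  unfold mult at h
  rw [Finset.card_ne_zero] at h
  obtain ⟨i, hi⟩ := h.exists_mem
  simp only [Finset.mem_filter, Finset.mem_range] at hi
  have := hf.1 (Nat.zero_le i)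
  omega

lemma cnt_eq_sum_mult {f : ℕ → ℕ} (hf : IsPart f) {v R : ℕ} (hv : 1 ≤ v) (hR : f 0 ≤ R) :
    cnt f v = ∑ r ∈ Finset.range R, if v ≤ r + 1 then mult f r else 0 := by
  classical
  unfold cnt
  rw [Finset.card_eq_sum_card_fiberwise (f := fun i => f i - 1) (t := Finset.range R)]
  · apply Finset.sum_congr rfl
    intro r _
    by_cases hvr : v ≤ r + 1
    · rw [if_pos hvr]
      unfold mult
      congr 1
      ext i
      simp only [Finset.mem_filter, Finset.mem_range]
      constructor
      · rintro ⟨⟨hi, hvi⟩, hr⟩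
        have := pos_of_lt_plen hf hi
        exact ⟨hi, by omega⟩
      · rintro ⟨hi, hr⟩
        exact ⟨⟨hi, by omega⟩, by omega⟩
    · rw [if_neg hvr]
      rw [Finset.card_eq_zero, Finset.filter_filter, Finset.filter_eq_empty_iff]
      rintro i hi ⟨hvi, hr⟩
      omega
  · intro i hi
    simp only [Finset.coe_filter, Finset.mem_coe, Set.mem_setOf_eq, Finset.mem_filter, Finset.mem_range] at hi ⊢
    have := hf.1 (Nat.zero_le i)
    omega

lemma part_ext {f f' : ℕ → ℕ} (hf : IsPart f) (hf' : IsPart f')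
    (h : ∀ r, mult f r = mult f' r) : f = f' := by
  have hcnt : ∀ v, 1 ≤ v → cnt f v = cnt f' v := by
    intro v hv
    rw [cnt_eq_sum_mult hf hv (le_max_left (f 0) (f' 0)),
        cnt_eq_sum_mult hf' hv (le_max_right (f 0) (f' 0))]
    exact Finset.sum_congr rfl fun r _ => by rw [h r]
  funext k
  have le1 : ∀ (u u' : ℕ → ℕ), IsPart u → IsPart u' →
      (∀ v, 1 ≤ v → cnt u v = cnt u' v) → u k ≤ u' k := by
    intro u u' hu hu' hc
    rcases Nat.eq_zero_or_pos (u k) with h0 | h0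
    · omega
    · have : k < cnt u (u k) := (le_iff_lt_cnt hu h0 k).mp le_rfl
      rw [hc _ h0] at this
      exact (le_iff_lt_cnt hu' h0 k).mpr this
  exact le_antisymm (le1 f f' hf hf' hcnt)
    (le1 f' f hf' hf (fun v hv => (hcnt v hv).symm))

lemma downset_mem_iff {B : ℕ} {T : Finset ℕ} (hT : T ⊆ Finset.Icc 1 B)
    (hdc : ∀ v ∈ T, ∀ w, 1 ≤ w → w ≤ v → w ∈ T) (v : ℕ) :
    v ∈ T ↔ 1 ≤ v ∧ v ≤ T.card := by
  constructor
  · intro hv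
    have h1 : 1 ≤ v := (Finset.mem_Icc.mp (hT hv)).1
    refine ⟨h1, ?_⟩
    have : Finset.Icc 1 v ⊆ T := by
      intro w hw
      obtain ⟨hw1, hw2⟩ := Finset.mem_Icc.mp hw
      exact hdc v hv w hw1 hw2
    calc v = (Finset.Icc 1 v).card := by rw [Nat.card_Icc]; omega
      _ ≤ T.card := Finset.card_le_card this
  · rintro ⟨h1, h2⟩
    by_contra hv
    have hsub : T ⊆ Finset.Icc 1 (v - 1) := by
      intro w hw
      have hw1 := Finset.mem_Icc.mp (hT hw)
      rw [Finset.mem_Icc]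
      refine ⟨hw1.1, ?_⟩
      by_contra hwv
      exact hv (hdc w hw v h1 (by omega))
    have := Finset.card_le_card hsub
    rw [Nat.card_Icc] at this
    omega

def cfun (d : ℕ → ℕ) (R v : ℕ) : ℕ := ∑ r ∈ Finset.range R, if v ≤ r + 1 then d r else 0

lemma cfun_anti (d : ℕ → ℕ) (R : ℕ) : Antitone (cfun d R) := by
  intro v w hvw
  apply Finset.sum_le_sum
  intro r _
  by_cases h : w ≤ r + 1
  · rw [if_pos h, if_pos (hvw.trans h)]
  · rw [if_neg h]; exact Nat.zero_le _

lemma cfun_eq_zero {d : ℕ → ℕ} {R v : ℕ} (h : R < v) : cfun d R v = 0 := by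
  apply Finset.sum_eq_zero
  intro r hr
  rw [if_neg]
  simp only [Finset.mem_range] at hr
  omega

def buildp (d : ℕ → ℕ) (R k : ℕ) : ℕ :=
  ((Finset.Icc 1 R).filter (fun v => k < cfun d R v)).card

lemma buildp_isPart (d : ℕ → ℕ) (R : ℕ) : IsPart (buildp d R) := by
  constructor
  · intro k k' hk
    apply Finset.card_le_card
    intro v hv
    simp only [Finset.mem_filter] at hv ⊢
    exact ⟨hv.1, by omega⟩
  · refine ⟨cfun d R 1, fun n hn => ?_⟩
    unfold buildp
    rw [Finset.card_eq_zero, Finset.filter_eq_empty_iff]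
    intro v hv
    have h1 : 1 ≤ v := (Finset.mem_Icc.mp hv).1
    have := cfun_anti d R h1
    omega

lemma buildp_le_iff {d : ℕ → ℕ} {R : ℕ} (k : ℕ) {v : ℕ} (hv : 1 ≤ v) :
    v ≤ buildp d R k ↔ k < cfun d R v := by
  have key := downset_mem_iff (T := (Finset.Icc 1 R).filter (fun v => k < cfun d R v))
    (Finset.filter_subset _ _)
    (fun w hw u hu huw => by
      simp only [Finset.mem_filter, Finset.mem_Icc] at hw ⊢
      refine ⟨⟨hu, huw.trans hw.1.2⟩, lt_of_lt_of_le hw.2 (cfun_anti d R huw)⟩) v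
  simp only [Finset.mem_filter, Finset.mem_Icc] at key
  by_cases hvR : v ≤ R
  · constructor
    · intro h
      exact (key.mpr ⟨hv, h⟩).2
    · intro h
      exact (key.mp ⟨⟨hv, hvR⟩, h⟩).2
  · constructor
    · intro h
      have : buildp d R k ≤ R := by
        unfold buildp
        calc _ ≤ (Finset.Icc 1 R).card := Finset.card_le_card (Finset.filter_subset _ _)
          _ = R := by rw [Nat.card_Icc]; omega
      omega
    · intro h
      rw [cfun_eq_zero (by omega)] at h
      omega

lemma buildp_cnt {d : ℕ → ℕ} {R : ℕ} {v : ℕ} (hv : 1 ≤ v) :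
    cnt (buildp d R) v = cfun d R v := by
  unfold cnt
  have : (Finset.range (plen (buildp d R))).filter (fun i => v ≤ buildp d R i)
      = Finset.range (cfun d R v) := by
    ext i
    simp only [Finset.mem_filter, Finset.mem_range]
    constructor
    · rintro ⟨_, h2⟩
      exact (buildp_le_iff i hv).mp h2
    · intro h
      have h2 : v ≤ buildp d R i := (buildp_le_iff i hv).mpr h
      refine ⟨lt_plen_of_ne (buildp_isPart d R) (by omega), h2⟩
  rw [this, Finset.card_range]

lemma cfun_succ (d : ℕ → ℕ) (R r : ℕ) :
    cfun d R (r + 1) = (if r < R then d r else 0) + cfun d R (r + 2) := by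
  unfold cfun
  have step : ∀ r' ∈ Finset.range R, (if r + 1 ≤ r' + 1 then d r' else 0)
      = (if r' = r then d r' else 0) + (if r + 2 ≤ r' + 1 then d r' else 0) := by
    intro r' _
    by_cases h1 : r' = r
    · subst h1; simp
    · by_cases h2 : r + 2 ≤ r' + 1
      · rw [if_pos (by omega), if_neg h1, if_pos h2, zero_add]
      · rw [if_neg (by omega), if_neg h1, if_neg h2, zero_add]
  rw [Finset.sum_congr rfl step, Finset.sum_add_distrib, Finset.sum_ite_eq' (Finset.range R)]
  simp [Finset.mem_range]

lemma buildp_mult {d : ℕ → ℕ} {R : ℕ} (hd : ∀ r, R ≤ r → d r = 0) (r : ℕ) :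
    mult (buildp d R) r = d r := by
  have h1 := mult_add_cnt (f := buildp d R) r
  rw [buildp_cnt (by omega), buildp_cnt (by omega)] at h1
  have h2 := cfun_succ d R r
  by_cases hrR : r < R
  · rw [if_pos hrR] at h2
    omega
  · rw [if_neg hrR] at h2
    rw [hd r (by omega)]
    omega

lemma exists_part_of_mult (d : ℕ → ℕ) (R : ℕ) (hd : ∀ r, R ≤ r → d r = 0) :
    ∃ f, IsPart f ∧ ∀ r, mult f r = d r :=
  ⟨buildp d R, buildp_isPart d R, buildp_mult hd⟩

noncomputable def emap (f g : ℕ → ℕ) : (Bool × ℕ) →₀ ℕ :=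
  (∑ i ∈ Finset.range (plen f), Finsupp.single (true, f i - 1) 1)
  + ∑ j ∈ Finset.range (plen g), Finsupp.single (false, g j - 1) 1

lemma emap_apply_aux {f : ℕ → ℕ} (hf : IsPart f) (s : Bool) (r : ℕ) :
    (∑ i ∈ Finset.range (plen f), Finsupp.single ((s, f i - 1) : Bool × ℕ) (1:ℕ)) (s, r)
      = mult f r := by
  classical
  rw [Finset.sum_apply']
  unfold mult
  rw [Finset.card_filter]
  apply Finset.sum_congr rfl
  intro i hi
  simp only [Finset.mem_range] at hi
  have hpos := pos_of_lt_plen hf hi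
  rw [Finsupp.single_apply]
  by_cases h : f i = r + 1
  · rw [if_pos (by simp [h]), if_pos h]
  · rw [if_neg (by simp only [Prod.mk.injEq]; omega), if_neg h]

lemma emap_apply_other {f : ℕ → ℕ} (s s' : Bool) (hss : s ≠ s') (r : ℕ) :
    (∑ i ∈ Finset.range (plen f), Finsupp.single ((s, f i - 1) : Bool × ℕ) (1:ℕ)) (s', r)
      = 0 := by
  classical
  rw [Finset.sum_apply']
  apply Finset.sum_eq_zero
  intro i _
  rw [Finsupp.single_apply, if_neg]
  simp only [Prod.mk.injEq]
  exact fun h => hss h.1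

lemma emap_apply {f g : ℕ → ℕ} (hf : IsPart f) (hg : IsPart g) (s : Bool) (r : ℕ) :
    emap f g (s, r) = mult (if s then f else g) r := by
  unfold emap
  rw [Finsupp.add_apply]
  cases s
  · rw [emap_apply_other true false (by simp), emap_apply_aux hg, zero_add, if_neg (by simp)]
  · rw [emap_apply_aux hf, emap_apply_other false true (by simp), add_zero, if_pos rfl]

lemma emap_inj {f g f' g' : ℕ → ℕ} (hf : IsPart f) (hg : IsPart g) (hf' : IsPart f')
    (hg' : IsPart g') (h : emap f g = emap f' g') : f = f' ∧ g = g' := by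
  constructor
  · apply part_ext hf hf'
    intro r
    have := congrFun (congrArg DFunLike.coe h) (true, r)
    rwa [emap_apply hf hg, emap_apply hf' hg', if_pos rfl, if_pos rfl] at this
  · apply part_ext hg hg'
    intro r
    have := congrFun (congrArg DFunLike.coe h) (false, r)
    rwa [emap_apply hf hg, emap_apply hf' hg', if_neg (by simp), if_neg (by simp)] at this

lemma emap_surj (d : (Bool × ℕ) →₀ ℕ) :
    ∃ f g, IsPart f ∧ IsPart g ∧ emap f g = d := by
  set R := (d.support.sup (fun p => p.2)) + 1 with hR
  have hbound : ∀ s r, R ≤ r → d (s, r) = 0 := by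
    intro s r hr
    by_contra h
    have : (s, r) ∈ d.support := Finsupp.mem_support_iff.mpr h
    have := Finset.le_sup (f := fun p : Bool × ℕ => p.2) this
    simp only at this
    omega
  obtain ⟨f, hf, hfm⟩ := exists_part_of_mult (fun r => d (true, r)) R (fun r hr => hbound _ _ hr)
  obtain ⟨g, hg, hgm⟩ := exists_part_of_mult (fun r => d (false, r)) R (fun r hr => hbound _ _ hr)
  refine ⟨f, g, hf, hg, ?_⟩
  ext p
  obtain ⟨s, r⟩ := p
  rw [emap_apply hf hg]
  cases s
  · simpa using hgm r
  · simpa using hfm r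

lemma prod_X_eq_monomial {ι : Type*} (s : Finset ι) (φ : ι → Bool × ℕ) :
    ∏ i ∈ s, (MvPolynomial.X (φ i) : RV)
      = MvPolynomial.monomial (∑ i ∈ s, Finsupp.single (φ i) 1) 1 := by
  classical
  induction s using Finset.induction_on with
  | empty => simp
  | insert x s hx ih =>
    rw [Finset.prod_insert hx, Finset.sum_insert hx, ih, MvPolynomial.X,
      MvPolynomial.monomial_mul, mul_one]

lemma finprod_vz_eq {f : ℕ → ℕ} (hf : IsPart f) (s : Bool) :
    ∏ᶠ i : ℕ, vz s (f i)
      = ∏ i ∈ Finset.range (plen f), (MvPolynomial.X ((s, f i - 1)) : RV) := by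
  rw [finprod_eq_prod_of_mulSupport_subset (fun i => vz s ((f i : ℤ))) (s := Finset.range (plen f))]
  · apply Finset.prod_congr rfl
    intro i hi
    simp only [Finset.mem_range] at hi
    have := pos_of_lt_plen hf hi
    rw [vz_natCast, if_neg (by omega)]
  · intro i hi
    simp only [Function.mem_mulSupport] at hi
    simp only [Finset.coe_range, Set.mem_Iio]
    apply lt_plen_of_ne hf
    intro h0
    rw [h0] at hi
    exact hi (by rw [Nat.cast_zero, vz_zero])

lemma vmono_eq_monomial {f g : ℕ → ℕ} (hf : IsPart f) (hg : IsPart g) :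
    vmono f g = MvPolynomial.monomial (emap f g) 1 := by
  unfold vmono
  rw [finprod_vz_eq hf, finprod_vz_eq hg, prod_X_eq_monomial, prod_X_eq_monomial,
    MvPolynomial.monomial_mul, mul_one]
  rfl

lemma PDom.refl (f : ℕ → ℕ) : PDom f f := Or.inr ⟨rfl, fun _ => le_rfl⟩

lemma PDom.trans {h g f : ℕ → ℕ} (h1 : PDom h g) (h2 : PDom g f) : PDom h f := by
  rcases h1 with h1 | ⟨h1e, h1d⟩ <;> rcases h2 with h2 | ⟨h2e, h2d⟩
  · exact Or.inl (h1.trans h2)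
  · exact Or.inl (h2e ▸ h1)
  · exact Or.inl (h1e ▸ h2)
  · exact Or.inr ⟨h1e.trans h2e, fun k => (h2d k).trans (h1d k)⟩

lemma PDom.antisymm {g f : ℕ → ℕ} (h1 : PDom g f) (h2 : PDom f g) : g = f := by
  rcases h1 with h1 | ⟨h1e, h1d⟩ <;> rcases h2 with h2 | ⟨h2e, h2d⟩
  · omega
  · omega
  · omega
  · funext k
    have e1 := h1d (k+1)
    have e2 := h2d (k+1)
    have e3 := h1d k
    have e4 := h2d k
    have r1 : ∑ i ∈ Finset.range (k+1), f i = ∑ i ∈ Finset.range k, f i + f k :=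
      Finset.sum_range_succ f k
    have r2 : ∑ i ∈ Finset.range (k+1), g i = ∑ i ∈ Finset.range k, g i + g k :=
      Finset.sum_range_succ g k
    omega

lemma psum_le_of_PDom {g f : ℕ → ℕ} (h : PDom g f) : ∑ᶠ i, g i ≤ ∑ᶠ i, f i := by
  rcases h with h | ⟨h, _⟩ <;> omega

/-- partitions with bounded sum form a finite set -/
lemma finite_parts_bounded (n : ℕ) : {h : ℕ → ℕ | IsPart h ∧ ∑ᶠ i, h i ≤ n}.Finite := by
  have key : ∀ h ∈ {h : ℕ → ℕ | IsPart h ∧ ∑ᶠ i, h i ≤ n}, ∀ k, n ≤ k → h k = 0 := by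
    intro h hh k hk
    exact eventually_zero_of_psum_le hh.1 hh.2 hk
  have bnd : ∀ h ∈ {h : ℕ → ℕ | IsPart h ∧ ∑ᶠ i, h i ≤ n}, ∀ i, h i ≤ n :=
    fun h hh i => (apply_le_psum hh.1 i).trans hh.2
  apply Set.Finite.of_finite_image
    (f := fun h => fun i : Fin (n+1) => (⟨min (h i) n, by omega⟩ : Fin (n+1)))
  · exact Set.toFinite _
  · intro h1 hh1 h2 hh2 he
    funext k
    by_cases hk : k < n + 1
    · have := congrFun he ⟨k, hk⟩
      have b1 := bnd h1 hh1 k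
      have b2 := bnd h2 hh2 k
      simpa [Fin.ext_iff, Nat.min_eq_left b1, Nat.min_eq_left b2] using this
    · rw [key h1 hh1 k (by omega), key h2 hh2 k (by omega)]

def Dset (f g : ℕ → ℕ) : Set ((ℕ → ℕ) × (ℕ → ℕ)) :=
  {p | IsPart p.1 ∧ IsPart p.2 ∧ PDom p.1 f ∧ PDom p.2 g ∧ p ≠ (f, g)}

lemma Dset_finite (f g : ℕ → ℕ) : (Dset f g).Finite := by
  apply Set.Finite.subset
    (((finite_parts_bounded (∑ᶠ i, f i)).prod (finite_parts_bounded (∑ᶠ i, g i))))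
  rintro ⟨p, q⟩ ⟨hp, hq, hpf, hqg, _⟩
  exact ⟨⟨hp, psum_le_of_PDom hpf⟩, ⟨hq, psum_le_of_PDom hqg⟩⟩

noncomputable def umeas (f g : ℕ → ℕ) : ℕ := (Dset f g).ncard

lemma Dset_ssubset {f g : ℕ → ℕ} {q : (ℕ → ℕ) × (ℕ → ℕ)} (hq : q ∈ Dset f g) :
    Dset q.1 q.2 ⊂ Dset f g := by
  obtain ⟨hq1, hq2, hqf, hqg, hqne⟩ := hq
  constructor
  · rintro ⟨r1, r2⟩ ⟨hr1, hr2, hrq1, hrq2, hrne⟩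
    refine ⟨hr1, hr2, hrq1.trans hqf, hrq2.trans hqg, ?_⟩
    intro hre
    obtain ⟨e1, e2⟩ := Prod.mk.injEq .. ▸ hre
    subst e1; subst e2
    exact hqne (Prod.ext (hrq1.antisymm hqf).symm (hrq2.antisymm hqg).symm)
  · intro hsub
    have : q ∈ Dset q.1 q.2 := hsub ⟨hq1, hq2, hqf, hqg, hqne⟩
    exact this.2.2.2.2 rfl

lemma umeas_lt {f g : ℕ → ℕ} {q : (ℕ → ℕ) × (ℕ → ℕ)} (hq : q ∈ Dset f g) :
    umeas q.1 q.2 < umeas f g :=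
  Set.ncard_lt_ncard (Dset_ssubset hq) (Dset_finite f g)

lemma fin_strictMono_le {k l : ℕ} (e : Fin k → Fin l) (he : StrictMono e) (i : Fin k) :
    (i : ℕ) ≤ (e i : ℕ) := by
  classical
  let g : ℕ → ℕ := fun n => if h : n < k then (e ⟨n, h⟩ : ℕ) else n + l
  have hg : StrictMono g := by
    intro m n hmn
    by_cases hm : m < k <;> by_cases hn : n < k
    · simpa [g, hm, hn] using he (show (⟨m, hm⟩ : Fin k) < ⟨n, hn⟩ from hmn)
    · have : (e ⟨m, hm⟩ : ℕ) < l := (e ⟨m, hm⟩).2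
      simp only [g, dif_pos hm, dif_neg hn]
      omega
    · omega
    · simp only [g, dif_neg hm, dif_neg hn]
      omega
  have := hg.le_apply (x := (i : ℕ))
  simpa [g, i.2] using this

section Sorting
variable {ℓ : ℕ}

def stup (α : Fin ℓ → ℕ) : Fin ℓ → ℕ := fun i => α (Tuple.sort α (Fin.rev i))

lemma stup_anti (α : Fin ℓ → ℕ) : ∀ i j : Fin ℓ, i ≤ j → stup α j ≤ stup α i := by
  intro i j hij
  exact Tuple.monotone_sort α (Fin.rev_le_rev.mpr hij)

noncomputable def dsort (α : Fin ℓ → ℕ) : ℕ → ℕ :=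
  fun k => if h : k < ℓ then stup α ⟨k, h⟩ else 0

lemma dsort_isPart (α : Fin ℓ → ℕ) : IsPart (dsort α) := by
  constructor
  · intro k k' hk
    unfold dsort
    by_cases h' : k' < ℓ
    · rw [dif_pos h', dif_pos (by omega)]
      exact stup_anti α _ _ (by simpa using hk)
    · rw [dif_neg h']
      exact Nat.zero_le _
  · exact ⟨ℓ, fun n hn => by simp [dsort, not_lt.mpr hn]⟩

lemma dsort_apply_lt (α : Fin ℓ → ℕ) {k : ℕ} (h : k < ℓ) : dsort α k = stup α ⟨k, h⟩ :=
  dif_pos h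

lemma dsort_zero (α : Fin ℓ → ℕ) {k : ℕ} (h : ℓ ≤ k) : dsort α k = 0 :=
  dif_neg (not_lt.mpr h)

lemma stup_prod {M : Type*} [CommMonoid M] (α : Fin ℓ → ℕ) (F : ℕ → M) :
    ∏ i, F (stup α i) = ∏ i, F (α i) :=
  Equiv.prod_comp (Fin.revPerm.trans (Tuple.sort α)) (fun i => F (α i))

lemma stup_sum {M : Type*} [AddCommMonoid M] (α : Fin ℓ → ℕ) (F : ℕ → M) :
    ∑ i, F (stup α i) = ∑ i, F (α i) :=
  Equiv.sum_comp (Fin.revPerm.trans (Tuple.sort α)) (fun i => F (α i))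

/-- top-k property: any U-sum is at most the sum of the first |U| values of an
antitone tuple. -/
lemma topk_bound (s : Fin ℓ → ℕ) (hs : ∀ i j : Fin ℓ, i ≤ j → s j ≤ s i)
    (U : Finset (Fin ℓ)) :
    ∑ i ∈ U, s i ≤ ∑ i ∈ Finset.univ.filter (fun i : Fin ℓ => (i : ℕ) < U.card), s i := by
  classical
  have hcard : U.card ≤ ℓ := by
    simpa using Finset.card_le_card (Finset.subset_univ U)
  set k := U.card with hk
  have h1 : ∑ i ∈ U, s i = ∑ i : Fin k, s (U.orderEmbOfFin rfl i) := by
    rw [← Finset.sum_coe_sort U s]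
    rw [← Equiv.sum_comp (U.orderIsoOfFin rfl).toEquiv (fun u : U => s u)]
    apply Finset.sum_congr rfl
    intro i _
    rfl
  have h2 : ∀ i : Fin k, s (U.orderEmbOfFin rfl i) ≤ s ⟨(i : ℕ), lt_of_lt_of_le i.2 hcard⟩ := by
    intro i
    apply hs
    exact fin_strictMono_le _ (U.orderEmbOfFin rfl).strictMono i
  have h3 : ∑ i : Fin k, s ⟨(i : ℕ), lt_of_lt_of_le i.2 hcard⟩
      = ∑ i ∈ Finset.univ.filter (fun i : Fin ℓ => (i : ℕ) < k), s i := by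
    apply Finset.sum_bij (i := fun (i : Fin k) _ => (⟨(i : ℕ), lt_of_lt_of_le i.2 hcard⟩ : Fin ℓ))
    · intro i _
      simp [i.2]
    · intro i _ j _ hij
      have : (i : ℕ) = (j : ℕ) := by
        have := congrArg Fin.val hij
        simpa using this
      exact Fin.ext this
    · intro j hj
      simp only [Finset.mem_filter] at hj
      exact ⟨⟨(j : ℕ), hj.2⟩, Finset.mem_univ _, Fin.ext rfl⟩
    · intro i _
      rfl
  rw [h1, ← h3]
  exact Finset.sum_le_sum fun i _ => h2 i

end Sorting

section Cross
variable {n : ℕ}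

def okP {n : ℕ} (P : Fin n × Fin n → ℕ) : Prop :=
  ∀ ij : Fin n × Fin n, ¬ ij.1 < ij.2 → P ij = 0

def Carg (c : Fin n → ℤ) (P : Fin n × Fin n → ℕ) (i : Fin n) : ℤ :=
  c i + (∑ k, (P (i, k) : ℤ)) - ∑ k, (P (k, i) : ℤ)

lemma cross (P : Fin n × Fin n → ℕ) (hP : okP P) (F : Finset (Fin n))
    (hF : ∀ j ∈ F, ∀ i : Fin n, i ≤ j → i ∈ F) (c : Fin n → ℤ) :
    ∑ i ∈ F, Carg c P i = ∑ i ∈ F, c i + ∑ i ∈ F, ∑ k ∈ Fᶜ, (P (i, k) : ℤ) := by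
  classical
  unfold Carg
  rw [Finset.sum_sub_distrib, Finset.sum_add_distrib]
  have e1 : ∀ i : Fin n, (∑ k, (P (i, k) : ℤ))
      = ∑ k ∈ F, (P (i, k) : ℤ) + ∑ k ∈ Fᶜ, (P (i, k) : ℤ) :=
    fun i => (Finset.sum_add_sum_compl F _).symm
  have e2 : ∀ i : Fin n, (∑ k, (P (k, i) : ℤ))
      = ∑ k ∈ F, (P (k, i) : ℤ) + ∑ k ∈ Fᶜ, (P (k, i) : ℤ) :=
    fun i => (Finset.sum_add_sum_compl F _).symm
  rw [Finset.sum_congr rfl (fun i _ => e1 i), Finset.sum_congr rfl (fun i _ => e2 i),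
    Finset.sum_add_distrib, Finset.sum_add_distrib]
  have e3 : ∑ i ∈ F, ∑ k ∈ F, (P (i, k) : ℤ) = ∑ i ∈ F, ∑ k ∈ F, (P (k, i) : ℤ) :=
    Finset.sum_comm
  have e4 : ∑ i ∈ F, ∑ k ∈ Fᶜ, (P (k, i) : ℤ) = 0 := by
    apply Finset.sum_eq_zero
    intro i hi
    apply Finset.sum_eq_zero
    intro k hk
    rw [hP (k, i), Nat.cast_zero]
    intro hki
    exact (Finset.mem_compl.mp hk) (hF i hi k (le_of_lt hki))
  rw [e3, e4]
  ring

lemma filter_lt_downclosed (KK : ℕ) :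
    ∀ j ∈ Finset.univ.filter (fun i : Fin n => (i : ℕ) < KK),
      ∀ i : Fin n, i ≤ j → i ∈ Finset.univ.filter (fun i : Fin n => (i : ℕ) < KK) := by
  intro j hj i hij
  simp only [Finset.mem_filter, Finset.mem_univ, true_and] at hj ⊢
  omega

lemma carg_total (P : Fin n × Fin n → ℕ) (hP : okP P) (c : Fin n → ℤ) :
    ∑ i, Carg c P i = ∑ i, c i := by
  have := cross P hP Finset.univ (fun j _ i _ => Finset.mem_univ i) c
  simpa using this

lemma carg_partial_ge (P : Fin n × Fin n → ℕ) (hP : okP P) (c : Fin n → ℤ) (KK : ℕ) :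
    ∑ i ∈ Finset.univ.filter (fun i : Fin n => (i : ℕ) < KK), c i
      ≤ ∑ i ∈ Finset.univ.filter (fun i : Fin n => (i : ℕ) < KK), Carg c P i := by
  rw [cross P hP _ (filter_lt_downclosed KK) c]
  have : (0:ℤ) ≤ ∑ i ∈ Finset.univ.filter (fun i : Fin n => (i : ℕ) < KK),
      ∑ k ∈ (Finset.univ.filter (fun i : Fin n => (i : ℕ) < KK))ᶜ, (P (i, k) : ℤ) :=
    Finset.sum_nonneg fun i _ => Finset.sum_nonneg fun k _ => Int.natCast_nonneg _
  omega

lemma carg_partial_ge_strict (P : Fin n × Fin n → ℕ) (hP : okP P) (c : Fin n → ℤ)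
    {i0 j0 : Fin n} (hij : i0 < j0) :
    ∑ i ∈ Finset.univ.filter (fun i : Fin n => (i : ℕ) < (j0 : ℕ)), c i + (P (i0, j0) : ℤ)
      ≤ ∑ i ∈ Finset.univ.filter (fun i : Fin n => (i : ℕ) < (j0 : ℕ)), Carg c P i := by
  rw [cross P hP _ (filter_lt_downclosed _) c]
  have hmem : i0 ∈ Finset.univ.filter (fun i : Fin n => (i : ℕ) < (j0 : ℕ)) := by
    simp only [Finset.mem_filter, Finset.mem_univ, true_and]
    exact hij
  have hmem' : j0 ∈ (Finset.univ.filter (fun i : Fin n => (i : ℕ) < (j0 : ℕ)))ᶜ := by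
    simp
  have h1 : (P (i0, j0) : ℤ) ≤ ∑ k ∈ (Finset.univ.filter
      (fun i : Fin n => (i : ℕ) < (j0 : ℕ)))ᶜ, (P (i0, k) : ℤ) :=
    Finset.single_le_sum (fun k _ => Int.natCast_nonneg _) hmem'
  have h2 : ∑ k ∈ (Finset.univ.filter (fun i : Fin n => (i : ℕ) < (j0 : ℕ)))ᶜ, (P (i0, k) : ℤ)
      ≤ ∑ i ∈ Finset.univ.filter (fun i : Fin n => (i : ℕ) < (j0 : ℕ)),
          ∑ k ∈ (Finset.univ.filter (fun i : Fin n => (i : ℕ) < (j0 : ℕ)))ᶜ, (P (i, k) : ℤ) :=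
    Finset.single_le_sum (fun i _ => Finset.sum_nonneg fun k _ => Int.natCast_nonneg _) hmem
  omega

lemma carg_entry_bound (P : Fin n × Fin n → ℕ) (hP : okP P) (c : Fin n → ℤ)
    (hpos : ∀ i, 0 ≤ Carg c P i) {i0 j0 : Fin n} (hij : i0 < j0) :
    (P (i0, j0) : ℤ) ≤ ∑ i, c i
      - ∑ i ∈ Finset.univ.filter (fun i : Fin n => (i : ℕ) < (j0 : ℕ)), c i := by
  have h1 := carg_partial_ge_strict P hP c hij
  have h2 : ∑ i ∈ Finset.univ.filter (fun i : Fin n => (i : ℕ) < (j0 : ℕ)), Carg c P i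
      ≤ ∑ i, Carg c P i := by
    apply Finset.sum_le_sum_of_subset_of_nonneg (Finset.subset_univ _)
    exact fun i _ _ => hpos i
  have h3 := carg_total P hP c
  omega

end Cross

/-- any subset-sum is at most the corresponding initial sum of the sorted tuple -/
lemma sum_le_sorted {ℓ : ℕ} (α : Fin ℓ → ℕ) (U : Finset (Fin ℓ)) :
    ∑ i ∈ U, α i
      ≤ ∑ i ∈ Finset.univ.filter (fun i : Fin ℓ => (i : ℕ) < U.card), stup α i := by
  classical
  set e : Equiv.Perm (Fin ℓ) := Fin.revPerm.trans (Tuple.sort α) with he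
  have h1 : ∑ i ∈ U, α i = ∑ j ∈ U.image e.symm, stup α j := by
    rw [Finset.sum_image (fun x _ y _ h => e.symm.injective h)]
    apply Finset.sum_congr rfl
    intro i _
    show α i = stup α (e.symm i)
    unfold stup
    simp [he]
  rw [h1]
  have h2 := topk_bound (stup α) (stup_anti α) (U.image e.symm)
  rwa [Finset.card_image_of_injective _ e.symm.injective] at h2

section TermV
variable {ℓ m : ℕ}

noncomputable def coefC (S : Fin ℓ × Fin m → ℕ) (P : Fin ℓ × Fin ℓ → ℕ)
    (P' : Fin m × Fin m → ℕ) : K :=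
  (∏ ij : Fin ℓ × Fin m, cL (S ij)) * (∏ ij : Fin ℓ × Fin ℓ, cL (P ij)) *
    ∏ ij : Fin m × Fin m, cL (P' ij)

def AargV (a : Fin ℓ → ℤ) (S : Fin ℓ × Fin m → ℕ) (P : Fin ℓ × Fin ℓ → ℕ) (i : Fin ℓ) : ℤ :=
  a i - (∑ j, (S (i, j) : ℤ)) + (∑ k, (P (i, k) : ℤ)) - ∑ k, (P (k, i) : ℤ)

def BargV (b : Fin m → ℤ) (S : Fin ℓ × Fin m → ℕ) (P' : Fin m × Fin m → ℕ) (j : Fin m) : ℤ :=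
  b j - (∑ i, (S (i, j) : ℤ)) + (∑ k, (P' (j, k) : ℤ)) - ∑ k, (P' (k, j) : ℤ)

noncomputable def termV (a : Fin ℓ → ℤ) (b : Fin m → ℤ) (S : Fin ℓ × Fin m → ℕ)
    (P : Fin ℓ × Fin ℓ → ℕ) (P' : Fin m × Fin m → ℕ) : RV :=
  if okP P ∧ okP P' then
    coefC S P P' • ((∏ i, vz true (AargV a S P i)) * ∏ j, vz false (BargV b S P' j))
  else 0

lemma Vv_eq_termV (a : Fin ℓ → ℤ) (b : Fin m → ℤ) :
    Vv ℓ m a b = ∑ᶠ S, ∑ᶠ P, ∑ᶠ P', termV a b S P P' := by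
  unfold Vv
  refine finsum_congr fun S => finsum_congr fun P => finsum_congr fun P' => ?_
  unfold termV
  exact if_congr Iff.rfl rfl rfl

lemma AargV_eq_carg (a : Fin ℓ → ℤ) (S : Fin ℓ × Fin m → ℕ) (P : Fin ℓ × Fin ℓ → ℕ) :
    AargV a S P = Carg (fun i => a i - ∑ j, (S (i, j) : ℤ)) P := rfl

lemma BargV_eq_carg (b : Fin m → ℤ) (S : Fin ℓ × Fin m → ℕ) (P' : Fin m × Fin m → ℕ) :
    BargV b S P' = Carg (fun j => b j - ∑ i, (S (i, j) : ℤ)) P' := rfl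

lemma termV_ne_zero {a : Fin ℓ → ℤ} {b : Fin m → ℤ} {S P P'}
    (h : termV a b S P P' ≠ 0) :
    (okP P ∧ okP P') ∧ (∀ i, 0 ≤ AargV a S P i) ∧ (∀ j, 0 ≤ BargV b S P' j) := by
  by_cases hc : okP P ∧ okP P'
  · refine ⟨hc, ?_, ?_⟩
    · intro i
      by_contra hi
      apply h
      unfold termV
      rw [if_pos hc, Finset.prod_eq_zero (Finset.mem_univ i) (vz_neg (by omega)),
        zero_mul, smul_zero]
    · intro j
      by_contra hj
      apply h
      unfold termV
      rw [if_pos hc, Finset.prod_eq_zero (Finset.mem_univ j) (vz_neg (by omega)),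
        mul_zero, smul_zero]
  · exact absurd (if_neg hc) h

/-- sums of A-args: total statement -/
lemma Aarg_total {a : Fin ℓ → ℤ} {S P} (hP : okP P) :
    ∑ i, AargV a S P i = ∑ i, a i - ∑ ij : Fin ℓ × Fin m, (S ij : ℤ) := by
  rw [AargV_eq_carg, carg_total P hP, Finset.sum_sub_distrib]
  congr 1
  rw [Fintype.sum_prod_type]

lemma Barg_total {b : Fin m → ℤ} {S P'} (hP' : okP P') :
    ∑ j, BargV b S P' j = ∑ j, b j - ∑ ij : Fin ℓ × Fin m, (S ij : ℤ) := by
  rw [BargV_eq_carg, carg_total P' hP', Finset.sum_sub_distrib]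
  congr 1
  rw [Fintype.sum_prod_type_right]

lemma S_entry_bound {a : Fin ℓ → ℤ} {b : Fin m → ℤ} {S P P'}
    (h : termV a b S P P' ≠ 0) (ij : Fin ℓ × Fin m) :
    (S ij : ℤ) ≤ ∑ i, a i := by
  obtain ⟨⟨hP, _⟩, hA, _⟩ := termV_ne_zero h
  have h1 : 0 ≤ ∑ i, AargV a S P i := Finset.sum_nonneg fun i _ => hA i
  rw [Aarg_total hP] at h1
  have h2 : (S ij : ℤ) ≤ ∑ ij : Fin ℓ × Fin m, (S ij : ℤ) :=
    Finset.single_le_sum (fun k _ => Int.natCast_nonneg _) (Finset.mem_univ ij)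
  omega

lemma P_entry_bound {a : Fin ℓ → ℤ} {b : Fin m → ℤ} {S P P'}
    (ha : ∀ i, 0 ≤ a i) (h : termV a b S P P' ≠ 0) (ij : Fin ℓ × Fin ℓ) :
    (P ij : ℤ) ≤ ∑ i, a i := by
  obtain ⟨⟨hP, _⟩, hA, _⟩ := termV_ne_zero h
  have hc : ∀ i, a i - (∑ j, (S (i, j) : ℤ)) ≤ a i := by
    intro i
    have : 0 ≤ ∑ j, (S (i, j) : ℤ) := Finset.sum_nonneg fun k _ => Int.natCast_nonneg _
    omega
  obtain ⟨i0, j0⟩ := ij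
  by_cases hij : i0 < j0
  · have key := carg_entry_bound P hP (fun i => a i - ∑ j, (S (i, j) : ℤ))
      (by rw [← AargV_eq_carg (S := S) (a := a)]; exact hA) hij
    set F := Finset.univ.filter (fun i : Fin ℓ => (i : ℕ) < (j0 : ℕ)) with hF
    have e1 : ∑ i, (a i - ∑ j, (S (i, j) : ℤ))
        - ∑ i ∈ F, (a i - ∑ j, (S (i, j) : ℤ))
        = ∑ i ∈ Fᶜ, (a i - ∑ j, (S (i, j) : ℤ)) := by
      have := Finset.sum_add_sum_compl F (fun i => a i - ∑ j, (S (i, j) : ℤ))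
      omega
    rw [e1] at key
    have e2 : ∑ i ∈ Fᶜ, (a i - ∑ j, (S (i, j) : ℤ)) ≤ ∑ i ∈ Fᶜ, a i :=
      Finset.sum_le_sum fun i _ => hc i
    have e3 : ∑ i ∈ Fᶜ, a i ≤ ∑ i, a i :=
      Finset.sum_le_sum_of_subset_of_nonneg (Finset.subset_univ _) fun i _ _ => ha i
    omega
  · rw [hP (i0, j0) hij]
    have : 0 ≤ ∑ i, a i := Finset.sum_nonneg fun i _ => ha i
    simpa using this

lemma P'_entry_bound {a : Fin ℓ → ℤ} {b : Fin m → ℤ} {S P P'}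
    (hb : ∀ j, 0 ≤ b j) (h : termV a b S P P' ≠ 0) (ij : Fin m × Fin m) :
    (P' ij : ℤ) ≤ ∑ j, b j := by
  obtain ⟨⟨_, hP'⟩, _, hB⟩ := termV_ne_zero h
  have hc : ∀ j, b j - (∑ i, (S (i, j) : ℤ)) ≤ b j := by
    intro j
    have : 0 ≤ ∑ i, (S (i, j) : ℤ) := Finset.sum_nonneg fun k _ => Int.natCast_nonneg _
    omega
  obtain ⟨i0, j0⟩ := ij
  by_cases hij : i0 < j0
  · have key := carg_entry_bound P' hP' (fun j => b j - ∑ i, (S (i, j) : ℤ))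
      (by rw [← BargV_eq_carg (S := S) (b := b)]; exact hB) hij
    set F := Finset.univ.filter (fun i : Fin m => (i : ℕ) < (j0 : ℕ)) with hF
    have e1 : ∑ j, (b j - ∑ i, (S (i, j) : ℤ))
        - ∑ j ∈ F, (b j - ∑ i, (S (i, j) : ℤ))
        = ∑ j ∈ Fᶜ, (b j - ∑ i, (S (i, j) : ℤ)) := by
      have := Finset.sum_add_sum_compl F (fun j => b j - ∑ i, (S (i, j) : ℤ))
      omega
    rw [e1] at key
    have e2 : ∑ j ∈ Fᶜ, (b j - ∑ i, (S (i, j) : ℤ)) ≤ ∑ j ∈ Fᶜ, b j :=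
      Finset.sum_le_sum fun j _ => hc j
    have e3 : ∑ j ∈ Fᶜ, b j ≤ ∑ j, b j :=
      Finset.sum_le_sum_of_subset_of_nonneg (Finset.subset_univ _) fun j _ _ => hb j
    omega
  · rw [hP' (i0, j0) hij]
    have : 0 ≤ ∑ j, b j := Finset.sum_nonneg fun j _ => hb j
    simpa using this

end TermV

noncomputable def bfin (ι : Type*) [Fintype ι] (B : ℕ) : Finset (ι → ℕ) :=
  (Finset.univ : Finset (ι → Fin (B+1))).image (fun v i => (v i : ℕ))

lemma mem_bfin {ι : Type*} [Fintype ι] {B : ℕ} {h : ι → ℕ} (hh : ∀ i, h i ≤ B) :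
    h ∈ bfin ι B := by
  apply Finset.mem_image.mpr
  exact ⟨fun i => ⟨h i, by have := hh i; omega⟩, Finset.mem_univ _, rfl⟩

lemma not_mem_bfin {ι : Type*} [Fintype ι] {B : ℕ} {h : ι → ℕ} (hh : h ∉ bfin ι B) :
    ∃ i, B < h i := by
  by_contra hc
  push_neg at hc
  exact hh (mem_bfin hc)

lemma finprod_vz {h : ℕ → ℕ} {M : ℕ} (hM : ∀ k, M ≤ k → h k = 0) (s : Bool) :
    ∏ᶠ i : ℕ, vz s (h i) = ∏ i ∈ Finset.range M, vz s ((h i : ℤ)) := by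
  apply finprod_eq_prod_of_mulSupport_subset (fun i => vz s ((h i : ℤ)))
  intro i hi
  simp only [Function.mem_mulSupport] at hi
  simp only [Finset.coe_range, Set.mem_Iio]
  by_contra hc
  rw [hM i (by omega)] at hi
  exact hi (by rw [Nat.cast_zero, vz_zero])

lemma sum_range_trunc {M' : Type*} [AddCommMonoid M'] {h : ℕ → M'} {M : ℕ}
    (hM : ∀ n, M ≤ n → h n = 0) (k : ℕ) :
    ∑ i ∈ Finset.range k, h i = ∑ i ∈ Finset.range (min k M), h i := by
  symm
  apply Finset.sum_subset
  · exact Finset.range_subset_range.mpr (by omega)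
  · intro i hi hni
    simp only [Finset.mem_range] at hi hni
    exact hM i (by omega)

lemma filter_val_sum {M' : Type*} [AddCommMonoid M'] {ℓ : ℕ} (G : ℕ → M') (k : ℕ) :
    ∑ i ∈ Finset.univ.filter (fun i : Fin ℓ => (i : ℕ) < k), G (i : ℕ)
      = ∑ j ∈ Finset.range (min k ℓ), G j := by
  apply Finset.sum_bij (i := fun (i : Fin ℓ) _ => (i : ℕ))
  · intro i hi
    simp only [Finset.mem_filter, Finset.mem_univ, true_and] at hi
    simp only [Finset.mem_range]
    omega
  · intro i _ j _ hij
    exact Fin.ext hij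
  · intro j hj
    simp only [Finset.mem_range] at hj
    refine ⟨⟨j, by omega⟩, ?_, rfl⟩
    simp only [Finset.mem_filter, Finset.mem_univ, true_and]
    omega
  · intro i _
    rfl

lemma card_filter_val_lt (ℓ k : ℕ) :
    (Finset.univ.filter (fun i : Fin ℓ => (i : ℕ) < k)).card = min k ℓ := by
  have := filter_val_sum (ℓ := ℓ) (fun _ => (1 : ℕ)) k
  simpa using this

lemma dsort_core {ℓ : ℕ} (αn : Fin ℓ → ℕ) (c : Fin ℓ → ℤ) (P : Fin ℓ × Fin ℓ → ℕ)
    (hval : ∀ i, (αn i : ℤ) = Carg c P i) (k : ℕ) :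
    ∑ i ∈ Finset.univ.filter (fun i : Fin ℓ => (i : ℕ) < k), Carg c P i
      ≤ ((∑ i ∈ Finset.range k, dsort αn i : ℕ) : ℤ) := by
  set F := Finset.univ.filter (fun i : Fin ℓ => (i : ℕ) < k) with hF
  have e1 : ∑ i ∈ F, Carg c P i = ((∑ i ∈ F, αn i : ℕ) : ℤ) := by
    push_cast
    exact Finset.sum_congr rfl fun i _ => (hval i).symm
  have e2 : ∑ i ∈ F, αn i ≤ ∑ i ∈ Finset.range k, dsort αn i := by
    calc ∑ i ∈ F, αn i
        ≤ ∑ i ∈ Finset.univ.filter (fun i : Fin ℓ => (i : ℕ) < F.card), stup αn i :=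
          sum_le_sorted αn F
      _ = ∑ i ∈ Finset.univ.filter (fun i : Fin ℓ => (i : ℕ) < F.card), dsort αn (i : ℕ) := by
          apply Finset.sum_congr rfl
          intro i _
          rw [dsort_apply_lt αn i.2]
      _ = ∑ j ∈ Finset.range (min F.card ℓ), dsort αn j := filter_val_sum _ _
      _ = ∑ j ∈ Finset.range (min (min k ℓ) ℓ), dsort αn j := by
          rw [hF, card_filter_val_lt]
      _ = ∑ j ∈ Finset.range (min k ℓ), dsort αn j := by
          rw [min_assoc, min_self]
      _ = ∑ i ∈ Finset.range k, dsort αn i := by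
          rw [← sum_range_trunc (fun n hn => dsort_zero αn hn) k]
  rw [e1]
  exact_mod_cast e2

lemma cL_zero : cL 0 = 1 := if_pos rfl

lemma termV_zero {ℓ m : ℕ} (a : Fin ℓ → ℤ) (b : Fin m → ℤ) :
    termV a b 0 0 0 = (∏ i, vz true (a i)) * ∏ j, vz false (b j) := by
  have h0 : okP (0 : Fin ℓ × Fin ℓ → ℕ) := fun _ _ => rfl
  have h0' : okP (0 : Fin m × Fin m → ℕ) := fun _ _ => rfl
  unfold termV
  rw [if_pos ⟨h0, h0'⟩]
  have hc : coefC (0 : Fin ℓ × Fin m → ℕ) 0 0 = 1 := by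
    unfold coefC
    simp [cL_zero]
  rw [hc, one_smul]
  congr 1
  · apply Finset.prod_congr rfl
    intro i _
    congr 1
    simp [AargV]
  · apply Finset.prod_congr rfl
    intro j _
    congr 1
    simp [BargV]

lemma Vv_finite_expansion {ℓ m : ℕ} (a : Fin ℓ → ℤ) (b : Fin m → ℤ)
    (ha : ∀ i, 0 ≤ a i) (hb : ∀ j, 0 ≤ b j) (Bd : ℕ)
    (hBa : ∑ i, a i ≤ (Bd : ℤ)) (hBb : ∑ j, b j ≤ (Bd : ℤ)) :
    Vv ℓ m a b = ∑ S ∈ bfin (Fin ℓ × Fin m) Bd, ∑ P ∈ bfin (Fin ℓ × Fin ℓ) Bd,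
      ∑ P' ∈ bfin (Fin m × Fin m) Bd, termV a b S P P' := by
  have hsup3 : ∀ S P, Function.support (fun P' => termV a b S P P')
      ⊆ ↑(bfin (Fin m × Fin m) Bd) := by
    intro S P P' hP'
    simp only [Function.mem_support] at hP'
    by_contra hmem
    obtain ⟨ij, hij⟩ := not_mem_bfin hmem
    have h1 := P'_entry_bound hb hP' ij
    have h2 : (P' ij : ℤ) ≤ (Bd : ℤ) := h1.trans hBb
    have : P' ij ≤ Bd := by exact_mod_cast h2
    omega
  have hsup2 : ∀ S, Function.support (fun P => ∑ᶠ P', termV a b S P P')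
      ⊆ ↑(bfin (Fin ℓ × Fin ℓ) Bd) := by
    intro S P hP
    simp only [Function.mem_support] at hP
    by_contra hmem
    apply hP
    obtain ⟨ij, hij⟩ := not_mem_bfin hmem
    have hz : ∀ P', termV a b S P P' = 0 := by
      intro P'
      by_contra h
      have h1 := P_entry_bound ha h ij
      have h2 : (P ij : ℤ) ≤ (Bd : ℤ) := h1.trans hBa
      have : P ij ≤ Bd := by exact_mod_cast h2
      omega
    calc ∑ᶠ P', termV a b S P P' = ∑ᶠ P' : Fin m × Fin m → ℕ, (0 : RV) :=
          finsum_congr fun P' => hz P'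
      _ = 0 := finsum_zero
  have hsup1 : Function.support (fun S => ∑ᶠ P, ∑ᶠ P', termV a b S P P')
      ⊆ ↑(bfin (Fin ℓ × Fin m) Bd) := by
    intro S hS
    simp only [Function.mem_support] at hS
    by_contra hmem
    apply hS
    obtain ⟨ij, hij⟩ := not_mem_bfin hmem
    have hz : ∀ P P', termV a b S P P' = 0 := by
      intro P P'
      by_contra h
      have h1 := S_entry_bound h ij
      have h2 : (S ij : ℤ) ≤ (Bd : ℤ) := h1.trans hBa
      have : S ij ≤ Bd := by exact_mod_cast h2
      omega
    calc ∑ᶠ P, ∑ᶠ P', termV a b S P P'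
        = ∑ᶠ P : Fin ℓ × Fin ℓ → ℕ, (0 : RV) := by
          apply finsum_congr
          intro P
          calc ∑ᶠ P', termV a b S P P' = ∑ᶠ P' : Fin m × Fin m → ℕ, (0 : RV) :=
                finsum_congr fun P' => hz P P'
            _ = 0 := finsum_zero
      _ = 0 := finsum_zero
  rw [Vv_eq_termV, finsum_eq_finset_sum_of_support_subset _ hsup1]
  refine Finset.sum_congr rfl fun S _ => ?_
  rw [finsum_eq_finset_sum_of_support_subset _ (hsup2 S)]
  refine Finset.sum_congr rfl fun P _ => ?_
  rw [finsum_eq_finset_sum_of_support_subset _ (hsup3 S P)]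

section Main
variable {f g : ℕ → ℕ}

lemma plen_dsort_le {ℓ : ℕ} (αn : Fin ℓ → ℕ) : plen (dsort αn) ≤ ℓ :=
  Nat.sInf_le (fun n hn => dsort_zero αn hn)

lemma prod_vz_dsort {ℓ : ℕ} (αn : Fin ℓ → ℕ) (s : Bool) :
    ∏ᶠ k : ℕ, vz s ((dsort αn k : ℤ)) = ∏ i : Fin ℓ, vz s ((αn i : ℤ)) := by
  rw [finprod_vz (fun k hk => dsort_zero αn hk) s,
    ← Fin.prod_univ_eq_prod_range (fun k => vz s ((dsort αn k : ℤ))) ℓ]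
  calc ∏ i : Fin ℓ, vz s ((dsort αn (i : ℕ) : ℤ))
      = ∏ i : Fin ℓ, vz s ((stup αn i : ℤ)) := by
        apply Finset.prod_congr rfl
        intro i _
        congr 2
        rw [dsort_apply_lt αn i.2]
    _ = ∏ i : Fin ℓ, vz s ((αn i : ℤ)) := stup_prod αn (fun v => vz s ((v : ℤ)))

lemma sum_dsort {ℓ : ℕ} (αn : Fin ℓ → ℕ) : ∑ᶠ k, dsort αn k = ∑ i : Fin ℓ, αn i := by
  rw [psum_eq_sum_range (dsort_isPart αn) (plen_dsort_le αn),
    ← Fin.sum_univ_eq_sum_range (fun k => dsort αn k) ℓ]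
  calc ∑ i : Fin ℓ, dsort αn (i : ℕ)
      = ∑ i : Fin ℓ, stup αn i := by
        apply Finset.sum_congr rfl
        intro i _
        rw [dsort_apply_lt αn i.2]
    _ = ∑ i : Fin ℓ, αn i := stup_sum αn (fun v => v)

/-- partial sums of a partition against the sorted version, ℤ form -/
lemma partial_sum_f_le {ℓ : ℕ} (hf : IsPart f) (hℓ : ℓ = plen f) (k : ℕ) :
    ((∑ i ∈ Finset.range k, f i : ℕ) : ℤ)
      = ∑ i ∈ Finset.univ.filter (fun i : Fin ℓ => (i : ℕ) < k), ((f (i : ℕ) : ℤ)) := by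
  rw [filter_val_sum (fun n => ((f n : ℕ) : ℤ)) k]
  rw [sum_range_trunc (M := ℓ) (fun n hn => plen_spec hf n (hℓ ▸ hn)) k]
  push_cast
  rfl

end Main

lemma termV_mem_span {f g : ℕ → ℕ} (hf : IsPart f) (hg : IsPart g) {ℓ m : ℕ}
    (hℓ : ℓ = plen f) (hm : m = plen g)
    (S : Fin ℓ × Fin m → ℕ) (P : Fin ℓ × Fin ℓ → ℕ) (P' : Fin m × Fin m → ℕ)
    (hne : ¬(S = 0 ∧ P = 0 ∧ P' = 0)) :
    termV (fun i => (f (i : ℕ) : ℤ)) (fun j => (g (j : ℕ) : ℤ)) S P P'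
      ∈ Submodule.span K ((fun p : (ℕ → ℕ) × (ℕ → ℕ) => vmono p.1 p.2) '' Dset f g) := by
  classical
  set a : Fin ℓ → ℤ := fun i => (f (i : ℕ) : ℤ) with haa
  set b : Fin m → ℤ := fun j => (g (j : ℕ) : ℤ) with hbb
  by_cases hz : termV a b S P P' = 0
  · rw [hz]; exact Submodule.zero_mem _
  obtain ⟨⟨hP, hP'⟩, hA, hB⟩ := termV_ne_zero hz
  set αn : Fin ℓ → ℕ := fun i => (AargV a S P i).toNat with hαn
  set βn : Fin m → ℕ := fun j => (BargV b S P' j).toNat with hβn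
  have hα : ∀ i, ((αn i : ℕ) : ℤ) = AargV a S P i := fun i => Int.toNat_of_nonneg (hA i)
  have hβ : ∀ j, ((βn j : ℕ) : ℤ) = BargV b S P' j := fun j => Int.toNat_of_nonneg (hB j)
  set p := dsort αn with hp
  set q := dsort βn with hq
  have hterm : termV a b S P P' = coefC S P P' • vmono p q := by
    unfold termV
    rw [if_pos ⟨hP, hP'⟩]
    congr 1
    unfold vmono
    congr 1
    · rw [prod_vz_dsort αn true]
      apply Finset.prod_congr rfl
      intro i _
      rw [hα i]
    · rw [prod_vz_dsort βn false]
      apply Finset.prod_congr rfl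
      intro j _
      rw [hβ j]
  have hpsum_p : ((∑ᶠ k, p k : ℕ) : ℤ) = ∑ i, a i - ∑ ij : Fin ℓ × Fin m, (S ij : ℤ) := by
    rw [hp, sum_dsort αn]
    push_cast
    rw [Finset.sum_congr rfl (fun i (_ : i ∈ Finset.univ) => hα i), Aarg_total hP]
  have hpsum_q : ((∑ᶠ k, q k : ℕ) : ℤ) = ∑ j, b j - ∑ ij : Fin ℓ × Fin m, (S ij : ℤ) := by
    rw [hq, sum_dsort βn]
    push_cast
    rw [Finset.sum_congr rfl (fun j (_ : j ∈ Finset.univ) => hβ j), Barg_total hP']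
  have hpsum_f : ((∑ᶠ k, f k : ℕ) : ℤ) = ∑ i, a i := by
    rw [psum_eq_sum_range hf hℓ.ge, ← Fin.sum_univ_eq_sum_range (fun k => f k) ℓ]
    push_cast
    rfl
  have hpsum_g : ((∑ᶠ k, g k : ℕ) : ℤ) = ∑ j, b j := by
    rw [psum_eq_sum_range hg hm.ge, ← Fin.sum_univ_eq_sum_range (fun k => g k) m]
    push_cast
    rfl
  have hppart : IsPart p := dsort_isPart αn
  have hqpart : IsPart q := dsort_isPart βn
  by_cases hS0 : S = 0
  · -- S = 0 : sizes preserved, dominance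
    subst hS0
    have hSz : ∑ ij : Fin ℓ × Fin m, ((0 : Fin ℓ × Fin m → ℕ) ij : ℤ) = 0 := by simp
    have hαc : ∀ i, ((αn i : ℕ) : ℤ)
        = Carg (fun i => a i - ∑ j, ((0 : Fin ℓ × Fin m → ℕ) (i, j) : ℤ)) P i := by
      intro i
      rw [hα i, AargV_eq_carg]
    have hβc : ∀ j, ((βn j : ℕ) : ℤ)
        = Carg (fun j => b j - ∑ i, ((0 : Fin ℓ × Fin m → ℕ) (i, j) : ℤ)) P' j := by
      intro j
      rw [hβ j, BargV_eq_carg]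
    have hca : ∀ k, ∑ i ∈ Finset.univ.filter (fun i : Fin ℓ => (i : ℕ) < k),
        (a i - ∑ j, ((0 : Fin ℓ × Fin m → ℕ) (i, j) : ℤ))
        = ∑ i ∈ Finset.univ.filter (fun i : Fin ℓ => (i : ℕ) < k), a i := by
      intro k
      apply Finset.sum_congr rfl
      intro i _
      simp
    have hcb : ∀ k, ∑ j ∈ Finset.univ.filter (fun j : Fin m => (j : ℕ) < k),
        (b j - ∑ i, ((0 : Fin ℓ × Fin m → ℕ) (i, j) : ℤ))
        = ∑ j ∈ Finset.univ.filter (fun j : Fin m => (j : ℕ) < k), b j := by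
      intro k
      apply Finset.sum_congr rfl
      intro j _
      simp
    have hpartial_p : ∀ k, ∑ i ∈ Finset.range k, f i ≤ ∑ i ∈ Finset.range k, p i := by
      intro k
      have h1 := carg_partial_ge P hP
        (fun i => a i - ∑ j, ((0 : Fin ℓ × Fin m → ℕ) (i, j) : ℤ)) k
      rw [hca k] at h1
      have h2 : ∑ i ∈ Finset.univ.filter (fun i : Fin ℓ => (i : ℕ) < k),
          Carg (fun i => a i - ∑ j, ((0 : Fin ℓ × Fin m → ℕ) (i, j) : ℤ)) P i
          ≤ ((∑ i ∈ Finset.range k, p i : ℕ) : ℤ) := dsort_core αn _ P hαc k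
      have h3 : ((∑ i ∈ Finset.range k, f i : ℕ) : ℤ)
          = ∑ i ∈ Finset.univ.filter (fun i : Fin ℓ => (i : ℕ) < k), a i :=
        partial_sum_f_le hf hℓ k
      have : ((∑ i ∈ Finset.range k, f i : ℕ) : ℤ) ≤ ((∑ i ∈ Finset.range k, p i : ℕ) : ℤ) := by
        rw [h3]
        exact h1.trans h2
      exact_mod_cast this
    have hpartial_q : ∀ k, ∑ j ∈ Finset.range k, g j ≤ ∑ j ∈ Finset.range k, q j := by
      intro k
      have h1 := carg_partial_ge P' hP'
        (fun j => b j - ∑ i, ((0 : Fin ℓ × Fin m → ℕ) (i, j) : ℤ)) k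
      rw [hcb k] at h1
      have h2 : ∑ j ∈ Finset.univ.filter (fun j : Fin m => (j : ℕ) < k),
          Carg (fun j => b j - ∑ i, ((0 : Fin ℓ × Fin m → ℕ) (i, j) : ℤ)) P' j
          ≤ ((∑ j ∈ Finset.range k, q j : ℕ) : ℤ) := dsort_core βn _ P' hβc k
      have h3 : ((∑ j ∈ Finset.range k, g j : ℕ) : ℤ)
          = ∑ j ∈ Finset.univ.filter (fun j : Fin m => (j : ℕ) < k), b j :=
        partial_sum_f_le hg hm k
      have : ((∑ j ∈ Finset.range k, g j : ℕ) : ℤ) ≤ ((∑ j ∈ Finset.range k, q j : ℕ) : ℤ) := by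
        rw [h3]
        exact h1.trans h2
      exact_mod_cast this
    have hpsum_p_eq : ∑ᶠ k, p k = ∑ᶠ k, f k := by
      have : ((∑ᶠ k, p k : ℕ) : ℤ) = ((∑ᶠ k, f k : ℕ) : ℤ) := by
        rw [hpsum_p, hpsum_f, hSz]
        ring
      exact_mod_cast this
    have hpsum_q_eq : ∑ᶠ k, q k = ∑ᶠ k, g k := by
      have : ((∑ᶠ k, q k : ℕ) : ℤ) = ((∑ᶠ k, g k : ℕ) : ℤ) := by
        rw [hpsum_q, hpsum_g, hSz]
        ring
      exact_mod_cast this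
    have hPDp : PDom p f := Or.inr ⟨hpsum_p_eq, hpartial_p⟩
    have hPDq : PDom q g := Or.inr ⟨hpsum_q_eq, hpartial_q⟩
    have hPP' : P ≠ 0 ∨ P' ≠ 0 := by
      by_contra hcon
      push_neg at hcon
      exact hne ⟨rfl, hcon.1, hcon.2⟩
    have hpairne : (p, q) ≠ (f, g) := by
      rcases hPP' with hPne | hP'ne
      · obtain ⟨ij0, hij0⟩ := Function.ne_iff.mp hPne
        obtain ⟨i0, j0⟩ := ij0
        have hij0' : P (i0, j0) ≠ 0 := by simpa using hij0
        have hij : i0 < j0 := by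
          by_contra hcon
          exact hij0' (hP (i0, j0) hcon)
        have hstrict := carg_partial_ge_strict P hP
          (fun i => a i - ∑ j, ((0 : Fin ℓ × Fin m → ℕ) (i, j) : ℤ)) hij
        rw [hca (j0 : ℕ)] at hstrict
        have h2 : ∑ i ∈ Finset.univ.filter (fun i : Fin ℓ => (i : ℕ) < (j0 : ℕ)),
            Carg (fun i => a i - ∑ j, ((0 : Fin ℓ × Fin m → ℕ) (i, j) : ℤ)) P i
            ≤ ((∑ i ∈ Finset.range (j0 : ℕ), p i : ℕ) : ℤ) := dsort_core αn _ P hαc (j0 : ℕ)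
        have h3 : ((∑ i ∈ Finset.range (j0 : ℕ), f i : ℕ) : ℤ)
            = ∑ i ∈ Finset.univ.filter (fun i : Fin ℓ => (i : ℕ) < (j0 : ℕ)), a i :=
          partial_sum_f_le hf hℓ (j0 : ℕ)
        have h5 := hstrict.trans h2
        have hPpos : (1 : ℤ) ≤ (P (i0, j0) : ℤ) := by
          have := hij0'
          omega
        have hlt : ((∑ i ∈ Finset.range (j0 : ℕ), f i : ℕ) : ℤ)
            < ((∑ i ∈ Finset.range (j0 : ℕ), p i : ℕ) : ℤ) := by
          rw [h3]
          omega
        intro hpair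
        have hpf : p = f := congrArg Prod.fst hpair
        rw [hpf] at hlt
        omega
      · obtain ⟨ij0, hij0⟩ := Function.ne_iff.mp hP'ne
        obtain ⟨i0, j0⟩ := ij0
        have hij0' : P' (i0, j0) ≠ 0 := by simpa using hij0
        have hij : i0 < j0 := by
          by_contra hcon
          exact hij0' (hP' (i0, j0) hcon)
        have hstrict := carg_partial_ge_strict P' hP'
          (fun j => b j - ∑ i, ((0 : Fin ℓ × Fin m → ℕ) (i, j) : ℤ)) hij
        rw [hcb (j0 : ℕ)] at hstrict
        have h2 : ∑ j ∈ Finset.univ.filter (fun j : Fin m => (j : ℕ) < (j0 : ℕ)),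
            Carg (fun j => b j - ∑ i, ((0 : Fin ℓ × Fin m → ℕ) (i, j) : ℤ)) P' j
            ≤ ((∑ j ∈ Finset.range (j0 : ℕ), q j : ℕ) : ℤ) := dsort_core βn _ P' hβc (j0 : ℕ)
        have h3 : ((∑ j ∈ Finset.range (j0 : ℕ), g j : ℕ) : ℤ)
            = ∑ j ∈ Finset.univ.filter (fun j : Fin m => (j : ℕ) < (j0 : ℕ)), b j :=
          partial_sum_f_le hg hm (j0 : ℕ)
        have h5 := hstrict.trans h2
        have hPpos : (1 : ℤ) ≤ (P' (i0, j0) : ℤ) := by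
          have := hij0'
          omega
        have hlt : ((∑ j ∈ Finset.range (j0 : ℕ), g j : ℕ) : ℤ)
            < ((∑ j ∈ Finset.range (j0 : ℕ), q j : ℕ) : ℤ) := by
          rw [h3]
          omega
        intro hpair
        have hqg : q = g := congrArg Prod.snd hpair
        rw [hqg] at hlt
        omega
    rw [hterm]
    exact Submodule.smul_mem _ _
      (Submodule.subset_span ⟨(p, q), ⟨hppart, hqpart, hPDp, hPDq, hpairne⟩, rfl⟩)
  · -- S ≠ 0 : sizes strictly decrease
    obtain ⟨ij0, hij0⟩ := Function.ne_iff.mp hS0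
    have hSpos : (1 : ℤ) ≤ ∑ ij : Fin ℓ × Fin m, (S ij : ℤ) := by
      have hS1 : S ij0 ≠ 0 := by simpa using hij0
      have h1 : (1 : ℤ) ≤ (S ij0 : ℤ) := by omega
      have h2 : (S ij0 : ℤ) ≤ ∑ ij : Fin ℓ × Fin m, (S ij : ℤ) :=
        Finset.single_le_sum (fun k _ => Int.natCast_nonneg _) (Finset.mem_univ ij0)
      omega
    have hlt_p : ∑ᶠ k, p k < ∑ᶠ k, f k := by
      have : ((∑ᶠ k, p k : ℕ) : ℤ) < ((∑ᶠ k, f k : ℕ) : ℤ) := by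
        rw [hpsum_p, hpsum_f]
        omega
      exact_mod_cast this
    have hlt_q : ∑ᶠ k, q k < ∑ᶠ k, g k := by
      have : ((∑ᶠ k, q k : ℕ) : ℤ) < ((∑ᶠ k, g k : ℕ) : ℤ) := by
        rw [hpsum_q, hpsum_g]
        omega
      exact_mod_cast this
    have hpairne : (p, q) ≠ (f, g) := by
      intro hpair
      have hpf : p = f := congrArg Prod.fst hpair
      rw [hpf] at hlt_p
      omega
    rw [hterm]
    exact Submodule.smul_mem _ _
      (Submodule.subset_span ⟨(p, q), ⟨hppart, hqpart, Or.inl hlt_p, Or.inl hlt_q, hpairne⟩, rfl⟩)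

lemma main_span {f g : ℕ → ℕ} (hf : IsPart f) (hg : IsPart g) :
    Vpart f g - vmono f g ∈ Submodule.span K
      ((fun p : (ℕ → ℕ) × (ℕ → ℕ) => vmono p.1 p.2) '' Dset f g) := by
  classical
  set Bd : ℕ := (∑ i : Fin (plen f), f (i : ℕ)) + ∑ j : Fin (plen g), g (j : ℕ) with hBd
  have hBa : ∑ i : Fin (plen f), ((f (i : ℕ) : ℕ) : ℤ) ≤ (Bd : ℤ) := by
    rw [hBd]
    push_cast
    have : (0:ℤ) ≤ ∑ j : Fin (plen g), (g (j:ℕ) : ℤ) :=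
      Finset.sum_nonneg fun j _ => Int.natCast_nonneg _
    omega
  have hBb : ∑ j : Fin (plen g), ((g (j : ℕ) : ℕ) : ℤ) ≤ (Bd : ℤ) := by
    rw [hBd]
    push_cast
    have : (0:ℤ) ≤ ∑ i : Fin (plen f), (f (i:ℕ) : ℤ) :=
      Finset.sum_nonneg fun i _ => Int.natCast_nonneg _
    omega
  set a : Fin (plen f) → ℤ := fun i => (f (i : ℕ) : ℤ) with haa
  set b : Fin (plen g) → ℤ := fun j => (g (j : ℕ) : ℤ) with hbb
  have ha : ∀ i, 0 ≤ a i := fun i => Int.natCast_nonneg _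
  have hb : ∀ j, 0 ≤ b j := fun j => Int.natCast_nonneg _
  have hVp : Vpart f g = ∑ S ∈ bfin (Fin (plen f) × Fin (plen g)) Bd,
      ∑ P ∈ bfin (Fin (plen f) × Fin (plen f)) Bd,
      ∑ P' ∈ bfin (Fin (plen g) × Fin (plen g)) Bd, termV a b S P P' := by
    unfold Vpart
    exact Vv_finite_expansion a b ha hb Bd hBa hBb
  set T := (bfin (Fin (plen f) × Fin (plen g)) Bd) ×ˢ
    ((bfin (Fin (plen f) × Fin (plen f)) Bd) ×ˢ (bfin (Fin (plen g) × Fin (plen g)) Bd)) with hT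
  have hflat : ∑ x ∈ T, termV a b x.1 x.2.1 x.2.2
      = ∑ S ∈ bfin (Fin (plen f) × Fin (plen g)) Bd,
        ∑ P ∈ bfin (Fin (plen f) × Fin (plen f)) Bd,
        ∑ P' ∈ bfin (Fin (plen g) × Fin (plen g)) Bd, termV a b S P P' := by
    rw [hT, Finset.sum_product]
    apply Finset.sum_congr rfl
    intro S _
    rw [Finset.sum_product]
  have hx0 : ((0 : Fin (plen f) × Fin (plen g) → ℕ),
      ((0 : Fin (plen f) × Fin (plen f) → ℕ), (0 : Fin (plen g) × Fin (plen g) → ℕ))) ∈ T := by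
    rw [hT]
    refine Finset.mem_product.mpr ⟨mem_bfin (fun _ => Nat.zero_le _),
      Finset.mem_product.mpr ⟨mem_bfin (fun _ => Nat.zero_le _),
        mem_bfin (fun _ => Nat.zero_le _)⟩⟩
  have hsplit := Finset.add_sum_erase T (fun x => termV a b x.1 x.2.1 x.2.2) hx0
  have hvm : termV a b 0 0 0 = vmono f g := by
    rw [termV_zero a b]
    unfold vmono
    rw [finprod_vz (plen_spec hf) true, finprod_vz (plen_spec hg) false,
      ← Fin.prod_univ_eq_prod_range (fun k => vz true ((f k : ℤ))) (plen f),
      ← Fin.prod_univ_eq_prod_range (fun k => vz false ((g k : ℤ))) (plen g)]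
  have hkey : Vpart f g - vmono f g = ∑ x ∈ T.erase ((0 : Fin (plen f) × Fin (plen g) → ℕ),
      ((0 : Fin (plen f) × Fin (plen f) → ℕ), (0 : Fin (plen g) × Fin (plen g) → ℕ))),
      termV a b x.1 x.2.1 x.2.2 := by
    rw [hVp, ← hflat, ← hsplit]
    simp only [hvm]
    ring
  rw [hkey]
  apply Submodule.sum_mem
  intro x hx
  obtain ⟨S, P, P'⟩ := x
  have hxne := Finset.ne_of_mem_erase hx
  apply termV_mem_span hf hg rfl rfl
  rintro ⟨rfl, rfl, rfl⟩
  exact hxne rfl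

section Assemble

/-- the index type of bipartitions -/
local notation "BP" => ({f : ℕ → ℕ // IsPart f} × {g : ℕ → ℕ // IsPart g})

noncomputable def Vfam : ({f : ℕ → ℕ // IsPart f} × {g : ℕ → ℕ // IsPart g}) → RV :=
  fun p => Vpart p.1.1 p.2.1

lemma part_one (f g : ℕ → ℕ) (hf : IsPart f) (hg : IsPart g) :
    ∃ c : (ℕ → ℕ) × (ℕ → ℕ) → K,
      Vpart f g = vmono f g +
        ∑ᶠ p : (ℕ → ℕ) × (ℕ → ℕ),
          if IsPart p.1 ∧ IsPart p.2 ∧ PDom p.1 f ∧ PDom p.2 g ∧ p ≠ (f, g) then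
            c p • vmono p.1 p.2
          else 0 := by
  classical
  have hx := main_span hf hg
  rw [Set.image_eq_range _ (Dset f g)] at hx
  obtain ⟨cc, hcc⟩ := Finsupp.mem_span_range_iff_exists_finsupp.mp hx
  refine ⟨fun p => if h : p ∈ Dset f g then cc ⟨p, h⟩ else 0, ?_⟩
  have hfin : (Function.support fun p : (ℕ → ℕ) × (ℕ → ℕ) =>
      if IsPart p.1 ∧ IsPart p.2 ∧ PDom p.1 f ∧ PDom p.2 g ∧ p ≠ (f, g) then
        (if h : p ∈ Dset f g then cc ⟨p, h⟩ else 0) • vmono p.1 p.2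
      else 0) ⊆ ↑(Dset_finite f g).toFinset := by
    intro p hp
    simp only [Function.mem_support] at hp
    simp only [Set.Finite.coe_toFinset]
    by_contra hmem
    exact hp (if_neg hmem)
  rw [finsum_eq_finset_sum_of_support_subset _ hfin]
  have hsum : ∑ p ∈ (Dset_finite f g).toFinset,
      (if IsPart p.1 ∧ IsPart p.2 ∧ PDom p.1 f ∧ PDom p.2 g ∧ p ≠ (f, g) then
        (if h : p ∈ Dset f g then cc ⟨p, h⟩ else 0) • vmono p.1 p.2
      else 0) = Vpart f g - vmono f g := by
    rw [← hcc]
    haveI := (Dset_finite f g).fintype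
    rw [Finsupp.sum_fintype _ _ (fun i => by rw [zero_smul])]
    rw [← Finset.sum_coe_sort ((Dset_finite f g).toFinset)]
    apply Finset.sum_bij
      (i := fun (x : ((Dset_finite f g).toFinset : Finset _)) _ =>
        (⟨x.1, (Set.Finite.mem_toFinset _).mp x.2⟩ : ↥(Dset f g)))
    · intro x _
      exact Finset.mem_univ _
    · intro x _ y _ hxy
      have : (x : (ℕ → ℕ) × (ℕ → ℕ)) = (y : (ℕ → ℕ) × (ℕ → ℕ)) := by
        have := congrArg Subtype.val hxy
        simpa using this
      exact Subtype.ext this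
    · intro d _
      refine ⟨⟨d.1, (Set.Finite.mem_toFinset _).mpr d.2⟩, Finset.mem_univ _, rfl⟩
    · intro x _
      have hxd : (x : (ℕ → ℕ) × (ℕ → ℕ)) ∈ Dset f g := (Set.Finite.mem_toFinset _).mp x.2
      have hxd' : IsPart (x : (ℕ → ℕ) × (ℕ → ℕ)).1 ∧ IsPart (x : (ℕ → ℕ) × (ℕ → ℕ)).2 ∧
          PDom (x : (ℕ → ℕ) × (ℕ → ℕ)).1 f ∧ PDom (x : (ℕ → ℕ) × (ℕ → ℕ)).2 g ∧
          (x : (ℕ → ℕ) × (ℕ → ℕ)) ≠ (f, g) := hxd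
      rw [if_pos hxd', dif_pos hxd]
  rw [hsum]
  ring

lemma vmono_mem_span :
    ∀ n, ∀ x1 x2 : ℕ → ℕ, IsPart x1 → IsPart x2 → umeas x1 x2 ≤ n →
      vmono x1 x2 ∈ Submodule.span K (Set.range Vfam) := by
  intro n
  induction n with
  | zero =>
    intro x1 x2 h1 h2 hu
    have h3 : Vpart x1 x2 ∈ Submodule.span K (Set.range Vfam) :=
      Submodule.subset_span ⟨(⟨x1, h1⟩, ⟨x2, h2⟩), rfl⟩
    have h4 : Vpart x1 x2 - vmono x1 x2 ∈ Submodule.span K (Set.range Vfam) := by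
      refine Submodule.span_le.mpr ?_ (main_span h1 h2)
      rintro _ ⟨q, hq, rfl⟩
      exfalso
      have := umeas_lt hq
      omega
    have := Submodule.sub_mem _ h3 h4
    simpa using this
  | succ n ih =>
    intro x1 x2 h1 h2 hu
    have h3 : Vpart x1 x2 ∈ Submodule.span K (Set.range Vfam) :=
      Submodule.subset_span ⟨(⟨x1, h1⟩, ⟨x2, h2⟩), rfl⟩
    have h4 : Vpart x1 x2 - vmono x1 x2 ∈ Submodule.span K (Set.range Vfam) := by
      refine Submodule.span_le.mpr ?_ (main_span h1 h2)
      rintro _ ⟨q, hq, rfl⟩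
      have hlt := umeas_lt hq
      exact ih q.1 q.2 hq.1 hq.2.1 (by omega)
    have := Submodule.sub_mem _ h3 h4
    simpa using this

lemma part_three : Submodule.span K (Set.range Vfam) = ⊤ := by
  classical
  apply eq_top_iff.mpr
  have hb := (MvPolynomial.basisMonomials (Bool × ℕ) K).span_eq
  rw [MvPolynomial.coe_basisMonomials] at hb
  rw [← hb]
  apply Submodule.span_le.mpr
  rintro _ ⟨d, rfl⟩
  obtain ⟨f', g', hf', hg', hemap⟩ := emap_surj d
  have : MvPolynomial.monomial d (1 : K) = vmono f' g' := by
    rw [vmono_eq_monomial hf' hg', hemap]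
  show MvPolynomial.monomial d (1 : K) ∈ _
  rw [this]
  exact vmono_mem_span (umeas f' g') f' g' hf' hg' le_rfl

set_option synthInstance.maxHeartbeats 1000000 in
lemma part_two : LinearIndependent K Vfam := by
  classical
  rw [linearIndependent_iff]
  intro l hl
  by_contra hlne
  have hne : l.support.Nonempty := Finsupp.support_nonempty_iff.mpr hlne
  obtain ⟨i0, hi0mem, hmax⟩ := Finset.exists_max_image l.support
    (fun i => umeas i.1.1 i.2.1) hne
  set d0 := emap i0.1.1 i0.2.1 with hd0
  have hcoeff : ∀ i ∈ l.support, MvPolynomial.coeff d0 (Vfam i)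
      = if i = i0 then 1 else 0 := by
    intro i hi
    have hdecomp : Vfam i = vmono i.1.1 i.2.1 + (Vpart i.1.1 i.2.1 - vmono i.1.1 i.2.1) := by
      unfold Vfam
      ring
    rw [hdecomp, MvPolynomial.coeff_add]
    have herr : MvPolynomial.coeff d0 (Vpart i.1.1 i.2.1 - vmono i.1.1 i.2.1) = 0 := by
      have hsp := main_span i.1.2 i.2.2
      have hker : Submodule.span K
          ((fun p : (ℕ → ℕ) × (ℕ → ℕ) => vmono p.1 p.2) '' Dset i.1.1 i.2.1)
          ≤ LinearMap.ker (MvPolynomial.lcoeff K d0) := by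
        apply Submodule.span_le.mpr
        rintro _ ⟨q, hq, rfl⟩
        simp only [SetLike.mem_coe, LinearMap.mem_ker, MvPolynomial.lcoeff_apply]
        rw [vmono_eq_monomial hq.1 hq.2.1, MvPolynomial.coeff_monomial]
        rw [if_neg]
        intro hqd
        have hinj := emap_inj hq.1 hq.2.1 i0.1.2 i0.2.2 (hqd.trans hd0)
        have hq0 : q = (i0.1.1, i0.2.1) := Prod.ext hinj.1 hinj.2
        rw [hq0] at hq
        have hlt := umeas_lt hq
        dsimp only at hlt
        have hle := hmax i hi
        omega
      have := hker hsp
      simpa using this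
    rw [herr, add_zero]
    rw [vmono_eq_monomial i.1.2 i.2.2, MvPolynomial.coeff_monomial]
    by_cases hii : i = i0
    · rw [if_pos hii, if_pos (by rw [hii])]
    · rw [if_neg hii, if_neg]
      intro hem
      rw [hd0] at hem
      have hinj := emap_inj i.1.2 i.2.2 i0.1.2 i0.2.2 hem
      exact hii (Prod.ext (Subtype.ext hinj.1) (Subtype.ext hinj.2))
  have hz := congrArg (MvPolynomial.lcoeff K d0) hl
  rw [map_zero, Finsupp.linearCombination_apply, map_finsuppSum] at hz
  have hz2 : (l.sum fun i a => MvPolynomial.lcoeff K d0 (a • Vfam i))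
      = l.sum fun i a => a * MvPolynomial.coeff d0 (Vfam i) := by
    apply Finsupp.sum_congr
    intro i _
    rw [map_smul, MvPolynomial.lcoeff_apply, smul_eq_mul]
  rw [hz2] at hz
  unfold Finsupp.sum at hz
  have hz3 : ∑ i ∈ l.support, l i * MvPolynomial.coeff d0 (Vfam i) = l i0 := by
    rw [Finset.sum_eq_single_of_mem i0 hi0mem]
    · rw [hcoeff i0 hi0mem, if_pos rfl, mul_one]
    · intro i hi hii
      rw [hcoeff i hi, if_neg hii, mul_zero]
  rw [hz3] at hz
  exact (Finsupp.mem_support_iff.mp hi0mem) hz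

end Assemble


theorem double_HL_triangular_and_basis :
    (∀ f g : ℕ → ℕ, IsPart f → IsPart g →
      ∃ c : (ℕ → ℕ) × (ℕ → ℕ) → K,
        Vpart f g = vmono f g +
          ∑ᶠ p : (ℕ → ℕ) × (ℕ → ℕ),
            if IsPart p.1 ∧ IsPart p.2 ∧ PDom p.1 f ∧ PDom p.2 g ∧ p ≠ (f, g) then
              c p • vmono p.1 p.2
            else 0) ∧
    LinearIndependent K
      (fun p : {f : ℕ → ℕ // IsPart f} × {g : ℕ → ℕ // IsPart g} => Vpart p.1.1 p.2.1) ∧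
    Submodule.span K (Set.range
      (fun p : {f : ℕ → ℕ // IsPart f} × {g : ℕ → ℕ // IsPart g} => Vpart p.1.1 p.2.1)) = ⊤ := by
  exact ⟨fun f g hf hg => part_one f g hf hg, part_two, part_three⟩

end
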